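/- Let A = {e_1, -e_1, ..., e_n, -e_n} ⊂ ℝ^n be the standard basis vectors and their negatives, viewed as a subset of ℓ_p^n for some p ∈ [1, ∞]. Any map f : A → ℝ that is non-expansive with respect to the ℓ_p distance (i.e., |f(x)-f(y)| ≤ ‖x-y‖_p for all x,y ∈ A) can 'satisfy' at most one antipodal pair, where the pair {e_i, -e_i} is satisfied if |f(e_i) - f(-e_i)| ≥ 2. Consequently, any embedding of A into ℓ_∞^d with expansion at most 1 and contraction strictly less than 2^{1-1/p} requires d ≥ n. -/

import Mathlib

open scoped ENNReal

lemma piLp_dist_single (p : ℝ≥0∞) [Fact (1 ≤ p)] {n : ℕ}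
    (x y : PiLp p (fun _ : Fin n => ℝ)) (i : Fin n)
    (h : ∀ j, dist (x j) (y j) = if j = i then 2 else 0) :
    dist x y = 2 := by
  have : Nonempty (Fin n) := ⟨i⟩
  rcases eq_or_ne p ∞ with rfl | hp
  · rw [PiLp.dist_eq_iSup]
    apply le_antisymm
    · exact ciSup_le fun j => by rw [h]; split <;> norm_num
    · calc (2:ℝ) = dist (x i) (y i) := by rw [h]; simp
        _ ≤ _ := le_ciSup (f := fun j => dist (x j) (y j)) (Finite.bddAbove_range _) i
  · have hp1 : (1:ℝ≥0∞) ≤ p := Fact.out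
    have hr : 0 < p.toReal := ENNReal.toReal_pos (zero_lt_one.trans_le hp1).ne' hp
    rw [PiLp.dist_eq_sum hr]
    have hs : ∑ j, dist (x j) (y j) ^ p.toReal = 2 ^ p.toReal := by
      simp only [h, apply_ite (fun t : ℝ => t ^ p.toReal), Real.zero_rpow hr.ne']
      simp
    rw [hs, ← Real.rpow_mul (by norm_num), mul_one_div, div_self hr.ne', Real.rpow_one]

lemma piLp_dist_pair (p : ℝ≥0∞) [Fact (1 ≤ p)] {n : ℕ}
    (x y : PiLp p (fun _ : Fin n => ℝ)) (i j : Fin n) (hij : i ≠ j)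
    (h : ∀ k, dist (x k) (y k) = if k = i ∨ k = j then 1 else 0) :
    dist x y = 2 / 2 ^ ((1 : ℝ) - 1 / p.toReal) := by
  rcases eq_or_ne p ∞ with rfl | hp
  · have hval : (2:ℝ) / 2 ^ ((1 : ℝ) - 1 / (∞ : ℝ≥0∞).toReal) = 1 := by
      simp [ENNReal.toReal_top]
    have : Nonempty (Fin n) := ⟨i⟩
    rw [hval, PiLp.dist_eq_iSup]
    apply le_antisymm
    · exact ciSup_le fun k => by rw [h]; split <;> norm_num
    · calc (1:ℝ) = dist (x i) (y i) := by rw [h]; simp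
        _ ≤ _ := le_ciSup (f := fun k => dist (x k) (y k)) (Finite.bddAbove_range _) i
  · have hp1 : (1:ℝ≥0∞) ≤ p := Fact.out
    have hr : 0 < p.toReal := ENNReal.toReal_pos (zero_lt_one.trans_le hp1).ne' hp
    rw [PiLp.dist_eq_sum hr]
    have hsplit : ∀ k : Fin n, dist (x k) (y k) ^ p.toReal
        = (if k = i then (1:ℝ) else 0) + (if k = j then (1:ℝ) else 0) := by
      intro k
      rw [h]
      rcases eq_or_ne k i with rfl | hki
      · simp [hij, Real.one_rpow]
      · rcases eq_or_ne k j with rfl | hkj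
        · simp [hki, Real.one_rpow]
        · simp [hki, hkj, Real.zero_rpow hr.ne']
    have hs : ∑ k, dist (x k) (y k) ^ p.toReal = 2 := by
      simp only [hsplit, Finset.sum_add_distrib]
      simp
      norm_num
    rw [hs, eq_div_iff (by positivity), mul_comm, ← Real.rpow_add two_pos]
    norm_num

theorem stmt0 (p : ℝ≥0∞) [Fact (1 ≤ p)] (n d : ℕ)
    (e : Fin n → PiLp p (fun _ : Fin n => ℝ))
    (he : ∀ i j, (WithLp.equiv p _ (e i)) j = if j = i then (1 : ℝ) else 0)
    (A : Set (PiLp p (fun _ : Fin n => ℝ)))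
    (hA : A = {v | ∃ i, v = e i ∨ v = -e i})
    (F : PiLp p (fun _ : Fin n => ℝ) → Fin d → ℝ)
    (hexp : ∀ x ∈ A, ∀ y ∈ A, ∀ k, |F x k - F y k| ≤ dist x y)
    (hcon : ∀ x ∈ A, ∀ y ∈ A, x ≠ y →
      ∃ k, dist x y / (2 : ℝ) ^ ((1 : ℝ) - 1 / p.toReal) < |F x k - F y k|) :
    (∀ g : PiLp p (fun _ : Fin n => ℝ) → ℝ,
      (∀ x ∈ A, ∀ y ∈ A, |g x - g y| ≤ dist x y) →
      ∀ i j : Fin n, 2 ≤ |g (e i) - g (-e i)| → 2 ≤ |g (e j) - g (-e j)| → i = j)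
    ∧ n ≤ d := by
  have hp1 : (1:ℝ≥0∞) ≤ p := Fact.out
  set D : ℝ := 2 / 2 ^ ((1 : ℝ) - 1 / p.toReal) with hD
  have he' : ∀ i j, e i j = if j = i then (1 : ℝ) else 0 := by
    intro i j; have := he i j; exact this
  -- memberships
  have hmem : ∀ i : Fin n, e i ∈ A ∧ -e i ∈ A := by
    intro i; rw [hA]; exact ⟨⟨i, Or.inl rfl⟩, ⟨i, Or.inr rfl⟩⟩
  -- e i ≠ -e i
  have hne : ∀ i : Fin n, e i ≠ -e i := by
    intro i h
    have := congrArg (fun v => v i) h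
    rw [PiLp.neg_apply] at this
    simp only [he', if_pos rfl] at this
    norm_num at this
  -- antipodal distance
  have hanti : ∀ i : Fin n, dist (e i) (-e i) = 2 := by
    intro i
    apply piLp_dist_single p _ _ i
    intro j
    rw [Real.dist_eq, PiLp.neg_apply, he']
    split <;> norm_num
  -- cross distances
  have hcross : ∀ i j : Fin n, i ≠ j → ∀ x y,
      (x = e i ∨ x = -e i) → (y = e j ∨ y = -e j) → dist x y = D := by
    intro i j hij x y hx hy
    apply piLp_dist_pair p _ _ i j hij
    obtain ⟨sx, hsx, hxk⟩ : ∃ s : ℝ, |s| = 1 ∧ ∀ k, x k = if k = i then s else 0 := by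
      rcases hx with rfl | rfl
      · exact ⟨1, by norm_num, fun k => by rw [he']⟩
      · exact ⟨-1, by norm_num, fun k => by
          rw [PiLp.neg_apply, he']; split <;> norm_num⟩
    obtain ⟨sy, hsy, hyk⟩ : ∃ s : ℝ, |s| = 1 ∧ ∀ k, y k = if k = j then s else 0 := by
      rcases hy with rfl | rfl
      · exact ⟨1, by norm_num, fun k => by rw [he']⟩
      · exact ⟨-1, by norm_num, fun k => by
          rw [PiLp.neg_apply, he']; split <;> norm_num⟩
    intro k
    rw [Real.dist_eq, hxk, hyk]
    rcases eq_or_ne k i with rfl | hki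
    · rw [if_pos rfl, if_neg hij, if_pos (Or.inl rfl), sub_zero, hsx]
    · rcases eq_or_ne k j with rfl | hkj
      · rw [if_neg hki, if_pos rfl, if_pos (Or.inr rfl), zero_sub, abs_neg, hsy]
      · simp [hki, hkj]
  -- key combinatorial lemma
  have key : ∀ g : PiLp p (fun _ : Fin n => ℝ) → ℝ,
      (∀ x ∈ A, ∀ y ∈ A, |g x - g y| ≤ dist x y) →
      ∀ i j : Fin n, i ≠ j → D < |g (e i) - g (-e i)| → D < |g (e j) - g (-e j)| → False := by
    intro g hg i j hij hi hj
    have c1 := hg _ (hmem i).1 _ (hmem j).1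
    have c2 := hg _ (hmem i).1 _ (hmem j).2
    have c3 := hg _ (hmem i).2 _ (hmem j).1
    have c4 := hg _ (hmem i).2 _ (hmem j).2
    rw [hcross i j hij _ _ (Or.inl rfl) (Or.inl rfl)] at c1
    rw [hcross i j hij _ _ (Or.inl rfl) (Or.inr rfl)] at c2
    rw [hcross i j hij _ _ (Or.inr rfl) (Or.inl rfl)] at c3
    rw [hcross i j hij _ _ (Or.inr rfl) (Or.inr rfl)] at c4
    obtain ⟨c1a, c1b⟩ := abs_le.mp c1
    obtain ⟨c2a, c2b⟩ := abs_le.mp c2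
    obtain ⟨c3a, c3b⟩ := abs_le.mp c3
    obtain ⟨c4a, c4b⟩ := abs_le.mp c4
    rcases abs_cases (g (e i) - g (-e i)) with ⟨h1, _⟩ | ⟨h1, _⟩ <;>
      rcases abs_cases (g (e j) - g (-e j)) with ⟨h2, _⟩ | ⟨h2, _⟩ <;>
      rw [h1] at hi <;> rw [h2] at hj <;> linarith
  -- case p = 1
  rcases eq_or_ne p 1 with rfl | hp1'
  · have hDval : D = 2 := by simp [hD]
    have habs : ∀ i : Fin n, False := by
      intro i
      obtain ⟨k, hk⟩ := hcon _ (hmem i).1 _ (hmem i).2 (hne i)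
      have hb := hexp _ (hmem i).1 _ (hmem i).2 k
      rw [hanti i] at hk hb
      have : (2:ℝ) / 2 ^ ((1 : ℝ) - 1 / (1:ℝ≥0∞).toReal) = 2 := by norm_num
      rw [this] at hk
      linarith
    constructor
    · intro g hg i j _ _; exact (habs i).elim
    · rcases Nat.eq_zero_or_pos n with rfl | hn
      · exact Nat.zero_le d
      · exact (habs ⟨0, hn⟩).elim
  -- case p ≠ 1 : D < 2
  · have hD2 : D < 2 := by
      rcases eq_or_ne p ∞ with rfl | hp
      · norm_num [hD]
      · have hr : 1 < p.toReal := by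
          rw [← ENNReal.toReal_one]
          exact (ENNReal.toReal_lt_toReal (by norm_num) hp).mpr (lt_of_le_of_ne hp1 (Ne.symm hp1'))
        have h1 : (0:ℝ) < 1 - 1 / p.toReal := by
          have : 1 / p.toReal < 1 := by
            rw [div_lt_one (by linarith)]; exact hr
          linarith
        have : (1:ℝ) < 2 ^ ((1 : ℝ) - 1 / p.toReal) := by
          have h2 : (2:ℝ) ^ (0:ℝ) < 2 ^ ((1 : ℝ) - 1 / p.toReal) :=
            (Real.rpow_lt_rpow_left_iff (by norm_num)).mpr h1
          rwa [Real.rpow_zero] at h2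
        rw [hD, div_lt_iff₀ (by positivity)]
        nlinarith
    constructor
    · intro g hg i j h2i h2j
      by_contra hij
      exact key g hg i j hij (lt_of_lt_of_le hD2 h2i) (lt_of_lt_of_le hD2 h2j)
    · have hpick : ∀ i : Fin n, ∃ k : Fin d, D < |F (e i) k - F (-e i) k| := by
        intro i
        obtain ⟨k, hk⟩ := hcon _ (hmem i).1 _ (hmem i).2 (hne i)
        rw [hanti i] at hk
        exact ⟨k, hk⟩
      choose K hK using hpick
      have hinj : Function.Injective K := by
        intro i j hKij
        by_contra hij
        exact key (fun x => F x (K i)) (fun x hx y hy => hexp x hx y hy (K i)) i j hij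
          (hK i) (hKij ▸ hK j)
      simpa using Fintype.card_le_of_injective K hinj
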